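/- For any integers Y₁ ≤ Y₂ and any integer γ', the number of integers Y with Y₁ ≤ Y ≤ Y₂ satisfying (24·Y + γ') mod 65 ≥ 41 equals ⌊(24(Y₂ + 1) + γ')/65⌋ − ⌊(24·Y₁ + γ')/65⌋. -/

import Mathlib

/-- The number of leap years `Y` with `Y₁ ≤ Y ≤ Y₂`, i.e. satisfying
`(24·Y + γ') mod 65 ≥ 41`, equals `⌊(24(Y₂+1) + γ')/65⌋ − ⌊(24·Y₁ + γ')/65⌋`. -/
theorem leap_year_count (Y₁ Y₂ γ' : ℤ) (h : Y₁ ≤ Y₂) :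
    (((Finset.Icc Y₁ Y₂).filter (fun Y => (24 * Y + γ') % 65 ≥ 41)).card : ℤ) =
      (24 * (Y₂ + 1) + γ') / 65 - (24 * Y₁ + γ') / 65 := by
  refine Int.le_induction (motive := fun Y₂ _ => (((Finset.Icc Y₁ Y₂).filter (fun Y => (24 * Y + γ') % 65 ≥ 41)).card : ℤ) = (24 * (Y₂ + 1) + γ') / 65 - (24 * Y₁ + γ') / 65) ?_ ?_ Y₂ h
  · beta_reduce
    rw [Finset.Icc_self, Finset.filter_singleton]
    split <;> rename_i h' <;> simp <;> omega
  · intro n hn ih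
    have hins : Finset.Icc Y₁ (n + 1) = insert (n + 1) (Finset.Icc Y₁ n) := by
      ext x; simp; omega
    rw [hins, Finset.filter_insert]
    have hnm : (n + 1) ∉ Finset.filter (fun Y => (24 * Y + γ') % 65 ≥ 41) (Finset.Icc Y₁ n) := by
      simp
    split <;> rename_i h'
    · rw [Finset.card_insert_of_notMem hnm]
      push_cast
      omega
    · push_neg at h'
      rw [ih]
      omega
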